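/- arXiv:1412.4386 — 2 statements merged into one kernel-verified Lean document; each statement's English description precedes it below -/
import Mathlib

section
/- Let E be a finite-dimensional real Banach space, ∂_w a weak subdifferential, and f : E → ]−∞,+∞] proper, lower semicontinuous, and with insignificant downside, and suppose gra ∂_w f is closed in E × E*. Then gra ∂_w f − gra(−J) = E × E* (Minkowski difference) and ran(∂_w f + J) = E*, where (∂_w f + J)(x) = ∂_w f(x) + J(x). -/
open Pointwise

/-- The convex subdifferential of a continuous convex real function `h` at `x`. -/
def convSubdiff {E : Type*} [NormedAddCommGroup E] [NormedSpace ℝ E]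
    (h : E → ℝ) (x : E) : Set (StrongDual ℝ E) :=
  {z | ∀ y : E, h x + z (y - x) ≤ h y}

/-- A weak subdifferential: a rule associating with each proper lower semicontinuous
`f : E → ]-∞,+∞]` a multifunction `E ⇉ E*` such that (i) `0 ∈ ∂_w f(x)` whenever `f`
attains a strict global minimum at `x`, and (ii) `∂_w(f + h)(x) ⊆ ∂_w f(x) + ∂h(x)`
for every continuous convex real function `h` on `E`. -/
structure WeakSubdiff (E : Type*) [NormedAddCommGroup E] [NormedSpace ℝ E] where
  sd : (E → EReal) → E → Set (StrongDual ℝ E)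
  zero_mem : ∀ f : E → EReal, (∃ x, f x ≠ ⊤) → (∀ x, f x ≠ ⊥) →
    LowerSemicontinuous f →
    ∀ x : E, (∀ y : E, y ≠ x → f x < f y) → 0 ∈ sd f x
  sum_rule : ∀ f : E → EReal, (∃ x, f x ≠ ⊤) → (∀ x, f x ≠ ⊥) →
    LowerSemicontinuous f →
    ∀ h : E → ℝ, Continuous h → ConvexOn ℝ Set.univ h →
    ∀ x : E, sd (fun z => f z + (h z : EReal)) x ⊆ sd f x + convSubdiff h x

/-- The duality mapping `J(x) = {x* : ⟨x, x*⟩ = ‖x‖², ‖x*‖ = ‖x‖}`. -/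
def dualityJ {E : Type*} [NormedAddCommGroup E] [NormedSpace ℝ E] (x : E) :
    Set (StrongDual ℝ E) :=
  {x' | x' x = ‖x‖ ^ 2 ∧ ‖x'‖ = ‖x‖}

/-- The graph of `-J`. -/
def graNegJ (E : Type*) [NormedAddCommGroup E] [NormedSpace ℝ E] :
    Set (E × StrongDual ℝ E) :=
  {p | -p.2 ∈ dualityJ p.1}

/-- `f` has insignificant downside: `f(x) ≥ -a₀‖x‖² - b₀‖x‖ - c₀` with `a₀ < ½`. -/
def InsigDownside {E : Type*} [NormedAddCommGroup E] [NormedSpace ℝ E]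
    (f : E → EReal) : Prop :=
  ∃ a₀ b₀ c₀ : ℝ, a₀ < 1 / 2 ∧
    ∀ x : E, ((-a₀ * ‖x‖ ^ 2 - b₀ * ‖x‖ - c₀ : ℝ) : EReal) ≤ f x


section Aux

variable {E : Type*} [NormedAddCommGroup E] [NormedSpace ℝ E]

def convSubdiff' (h : E → ℝ) (x : E) : Set (StrongDual ℝ E) :=
  {z | ∀ y : E, h x + z (y - x) ≤ h y}

lemma exists_min_on_compact' {α : Type*} [TopologicalSpace α] [T2Space α]
    {S : Set α} (hS : IsCompact S) (hne : S.Nonempty) {F : α → EReal}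
    (hF : LowerSemicontinuous F) : ∃ x ∈ S, ∀ y ∈ S, F x ≤ F y := by
  haveI : Nonempty S := hne.to_subtype
  set T : S → Set α := fun y => {x ∈ S | F x ≤ F y.1} with hT
  have hcl : ∀ y : S, IsClosed (T y) := fun y =>
    (hS.isClosed.inter (hF.isClosed_preimage (F y.1)))
  have hcc : ∀ y : S, IsCompact (T y) := fun y =>
    hS.of_isClosed_subset (hcl y) (fun x hx => hx.1)
  have hne' : ∀ y : S, (T y).Nonempty := fun y => ⟨y.1, y.2, le_rfl⟩
  have hdir : Directed (· ⊇ ·) T := by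
    intro y z
    rcases le_total (F y.1) (F z.1) with h | h
    · exact ⟨y, fun x hx => hx, fun x hx => ⟨hx.1, hx.2.trans h⟩⟩
    · exact ⟨z, fun x hx => ⟨hx.1, hx.2.trans h⟩, fun x hx => hx⟩
  obtain ⟨x, hx⟩ := IsCompact.nonempty_iInter_of_directed_nonempty_isCompact_isClosed
    T hdir hne' hcc hcl
  simp only [Set.mem_iInter] at hx
  refine ⟨x, (hx ⟨_, hne.choose_spec⟩).1, fun y hy => (hx ⟨y, hy⟩).2⟩

lemma mem_dualityJ_of_subgrad' (u : E) (w : StrongDual ℝ E)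
    (hw : ∀ v : E, (1/2 : ℝ) * ‖u‖^2 + w (v - u) ≤ (1/2 : ℝ) * ‖v‖^2) :
    w u = ‖u‖^2 ∧ ‖w‖ = ‖u‖ := by
  have key : ∀ d : E, w d ≤ ‖u‖ * ‖d‖ := by
    intro d
    refine le_of_forall_pos_le_add fun ε hε => ?_
    by_cases hd : d = 0
    · simp [hd]; positivity
    have hdn : 0 < ‖d‖ := norm_pos_iff.2 hd
    set s : ℝ := 2 * ε / ‖d‖^2 with hs
    have hspos : 0 < s := by positivity
    have h1 := hw (u + s • d)
    have h2 : w (u + s • d - u) = s * w d := by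
      simp [map_smul, smul_eq_mul]
    have h3 : ‖u + s • d‖ ≤ ‖u‖ + s * ‖d‖ := by
      calc ‖u + s • d‖ ≤ ‖u‖ + ‖s • d‖ := norm_add_le _ _
      _ = ‖u‖ + s * ‖d‖ := by rw [norm_smul, Real.norm_eq_abs, abs_of_pos hspos]
    have h4 : ‖u + s • d‖^2 ≤ (‖u‖ + s * ‖d‖)^2 := by
      have := norm_nonneg (u + s • d)
      nlinarith [norm_nonneg u, norm_nonneg d]
    rw [h2] at h1
    have h5 : s * w d ≤ s * (‖u‖ * ‖d‖) + (1/2) * s^2 * ‖d‖^2 := by nlinarith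
    have h6 : w d ≤ ‖u‖ * ‖d‖ + (1/2) * s * ‖d‖^2 := by
      have h5' : s * w d ≤ s * (‖u‖ * ‖d‖ + (1/2) * s * ‖d‖^2) := by nlinarith
      exact le_of_mul_le_mul_left h5' hspos
    have : (1/2) * s * ‖d‖^2 = ε := by
      rw [hs]
      have hd2 : ‖d‖^2 ≠ 0 := by positivity
      calc (1/2) * (2 * ε / ‖d‖^2) * ‖d‖^2 = ε * (‖d‖^2 / ‖d‖^2) := by ring
      _ = ε := by rw [div_self hd2, mul_one]
    linarith
  have hwle : ‖w‖ ≤ ‖u‖ := by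
    refine ContinuousLinearMap.opNorm_le_bound w (norm_nonneg u) fun d => ?_
    rw [Real.norm_eq_abs, abs_le]
    constructor
    · have := key (-d); simp at this; linarith [this]
    · exact key d
  have hgeq : ‖u‖^2 ≤ w u := by
    refine le_of_forall_pos_le_add fun ε hε => ?_
    by_cases hu : u = 0
    · simp [hu]; positivity
    have hun : 0 < ‖u‖ := norm_pos_iff.2 hu
    set s : ℝ := min 1 (2 * ε / ‖u‖^2) with hs
    have hspos : 0 < s := lt_min one_pos (by positivity)
    have h1 := hw ((1 - s) • u)
    have h2 : w ((1 - s) • u - u) = -s * w u := by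
      have : (1 - s) • u - u = (-s) • u := by module
      rw [this, map_smul]; simp [smul_eq_mul]
    have h3 : ‖(1 - s) • u‖^2 = (1 - s)^2 * ‖u‖^2 := by
      rw [norm_smul, Real.norm_eq_abs, mul_pow, sq_abs]
    rw [h2, h3] at h1
    have h5 : s * ‖u‖^2 ≤ s * w u + (1/2) * s^2 * ‖u‖^2 := by nlinarith
    have h6 : ‖u‖^2 ≤ w u + (1/2) * s * ‖u‖^2 := by
      have h5' : s * ‖u‖^2 ≤ s * (w u + (1/2) * s * ‖u‖^2) := by nlinarith
      exact le_of_mul_le_mul_left h5' hspos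
    have h7 : (1/2) * s * ‖u‖^2 ≤ ε := by
      have : s ≤ 2 * ε / ‖u‖^2 := min_le_right _ _
      calc (1/2) * s * ‖u‖^2 ≤ (1/2) * (2 * ε / ‖u‖^2) * ‖u‖^2 := by nlinarith
      _ = ε := by field_simp
    linarith
  have hle : w u ≤ ‖u‖^2 := by
    calc w u ≤ ‖u‖ * ‖u‖ := key u
    _ = ‖u‖^2 := (sq ‖u‖).symm
  have heq : w u = ‖u‖^2 := le_antisymm hle hgeq
  refine ⟨heq, le_antisymm hwle ?_⟩
  by_cases hu : u = 0
  · simp [hu, norm_nonneg]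
  · have hun : 0 < ‖u‖ := norm_pos_iff.2 hu
    have hb : w u ≤ ‖w‖ * ‖u‖ := by
      calc w u ≤ |w u| := le_abs_self _
      _ ≤ ‖w‖ * ‖u‖ := w.le_opNorm u
    nlinarith

lemma convexOn_normsq' (c : E) :
    ConvexOn ℝ Set.univ (fun x : E => ‖x - c‖^2) := by
  refine ⟨convex_univ, fun x _ y _ a b ha hb hab => ?_⟩
  have h1 : a • x + b • y - c = a • (x - c) + b • (y - c) := by
    rw [smul_sub, smul_sub]
    rw [show a • x - a • c + (b • y - b • c) = a • x + b • y - (a • c + b • c) by abel]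
    rw [← add_smul, hab, one_smul]
  have h2 : ‖a • x + b • y - c‖ ≤ a * ‖x - c‖ + b * ‖y - c‖ := by
    rw [h1]
    calc ‖a • (x - c) + b • (y - c)‖ ≤ ‖a • (x - c)‖ + ‖b • (y - c)‖ := norm_add_le _ _
    _ = a * ‖x - c‖ + b * ‖y - c‖ := by
        rw [norm_smul, norm_smul, Real.norm_eq_abs, Real.norm_eq_abs,
          abs_of_nonneg ha, abs_of_nonneg hb]
  have h3 := norm_nonneg (a • x + b • y - c)
  simp only [smul_eq_mul]
  nlinarith [norm_nonneg (x - c), norm_nonneg (y - c), sq_nonneg (‖x - c‖ - ‖y - c‖),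
    mul_nonneg ha hb]

lemma convexOn_quad' (z c : E) (z' : StrongDual ℝ E) (r : ℝ) (hr : 0 ≤ r) :
    ConvexOn ℝ Set.univ (fun x : E => (1/2 : ℝ) * ‖x - z‖^2 - z' x + r * ‖x - c‖^2) := by
  have hA : ConvexOn ℝ Set.univ (fun x : E => (1/2 : ℝ) * ‖x - z‖^2) := by
    have := (convexOn_normsq' (E := E) z).smul (c := (1/2 : ℝ)) (by norm_num)
    simpa [smul_eq_mul] using this
  have hB : ConvexOn ℝ Set.univ (fun x : E => -(z' x)) := by
    refine ⟨convex_univ, fun x _ y _ a b ha hb hab => ?_⟩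
    simp [map_add, map_smul, smul_eq_mul]
  have hC : ConvexOn ℝ Set.univ (fun x : E => r * ‖x - c‖^2) := by
    have := (convexOn_normsq' (E := E) c).smul (c := r) hr
    simpa [smul_eq_mul] using this
  have := (hA.add hB).add hC
  have e : (fun x : E => (1/2 : ℝ) * ‖x - z‖^2 - z' x + r * ‖x - c‖^2) =
      (((fun x : E => (1/2 : ℝ) * ‖x - z‖^2) + fun x : E => -(z' x)) +
        fun x : E => r * ‖x - c‖^2) := by
    funext x; simp [sub_eq_add_neg]
  rw [e]; exact this

lemma convSubdiff_perturb' {h : E → ℝ} (hconv : ConvexOn ℝ Set.univ h) {x₀ : E}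
    {w : StrongDual ℝ E}
    (hw : w ∈ convSubdiff' (fun x => h x + ‖x - x₀‖^2) x₀) :
    w ∈ convSubdiff' h x₀ := by
  intro y
  refine le_of_forall_pos_le_add fun ε hε => ?_
  by_cases hy : y = x₀
  · simp [hy]; linarith
  have hd : 0 < ‖y - x₀‖^2 := pow_pos (norm_pos_iff.2 (sub_ne_zero.2 hy)) 2
  set t : ℝ := min 1 (ε / ‖y - x₀‖^2) with ht
  have ht0 : 0 < t := lt_min one_pos (div_pos hε hd)
  have ht1 : t ≤ 1 := min_le_left _ _
  have key := hw (x₀ + t • (y - x₀))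
  have e1 : x₀ + t • (y - x₀) - x₀ = t • (y - x₀) := by abel
  have e2 : w (t • (y - x₀)) = t * w (y - x₀) := by rw [map_smul]; simp [smul_eq_mul]
  have e3 : ‖t • (y - x₀)‖^2 = t^2 * ‖y - x₀‖^2 := by
    rw [norm_smul, Real.norm_eq_abs, mul_pow, sq_abs]
  have e4 : h (x₀ + t • (y - x₀)) ≤ (1 - t) * h x₀ + t * h y := by
    have := hconv.2 (Set.mem_univ x₀) (Set.mem_univ y) (by linarith : (0:ℝ) ≤ 1 - t)
      (le_of_lt ht0) (by ring)
    have heq : (1 - t) • x₀ + t • y = x₀ + t • (y - x₀) := by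
      rw [sub_smul, one_smul, smul_sub]; abel
    rw [heq] at this
    simpa [smul_eq_mul] using this
  simp only [convSubdiff', Set.mem_setOf_eq] at key
  rw [e1, e2, e3] at key
  simp only [sub_self, norm_zero] at key
  have h5 : t * w (y - x₀) ≤ t * (h y - h x₀) + t^2 * ‖y - x₀‖^2 := by nlinarith
  have h6 : w (y - x₀) ≤ (h y - h x₀) + t * ‖y - x₀‖^2 := by
    have h5' : t * w (y - x₀) ≤ t * ((h y - h x₀) + t * ‖y - x₀‖^2) := by nlinarith
    exact le_of_mul_le_mul_left h5' ht0
  have h7 : t * ‖y - x₀‖^2 ≤ ε := by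
    have : t ≤ ε / ‖y - x₀‖^2 := min_le_right _ _
    calc t * ‖y - x₀‖^2 ≤ (ε / ‖y - x₀‖^2) * ‖y - x₀‖^2 := by nlinarith
    _ = ε := by rw [div_mul_cancel₀ ε hd.ne']
  linarith

end Aux

section Key

variable {E : Type*} [NormedAddCommGroup E] [NormedSpace ℝ E] [FiniteDimensional ℝ E]

lemma key_lemma (W : WeakSubdiff E) (f : E → EReal)
    (hproper : ∃ x, f x ≠ ⊤) (hnotbot : ∀ x, f x ≠ ⊥)
    (hlsc : LowerSemicontinuous f) (hdown : InsigDownside f)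
    (z : E) (z' : StrongDual ℝ E) :
    ∃ (x : E) (x' : StrongDual ℝ E), x' ∈ W.sd f x ∧ z' - x' ∈ dualityJ (x - z) := by
  obtain ⟨a₀, b₀, c₀, ha₀, hlb⟩ := hdown
  obtain ⟨x₁, hx₁⟩ := hproper
  set h : E → ℝ := fun x => (1/2 : ℝ) * ‖x - z‖^2 - z' x with hh
  have hcont : Continuous h := by
    apply Continuous.sub
    · exact (continuous_const.mul (((continuous_id.sub continuous_const).norm).pow 2))
    · exact z'.continuous
  have hlscF : LowerSemicontinuous (fun x => f x + (h x : EReal)) := by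
    apply hlsc.add' ((continuous_coe_real_ereal.comp hcont).lowerSemicontinuous)
    intro x
    exact EReal.continuousAt_add (Or.inr (EReal.coe_ne_bot _)) (Or.inr (EReal.coe_ne_top _))
  set F : E → EReal := fun x => f x + (h x : EReal) with hF
  set α : ℝ := 1/2 - a₀ with hα
  have hαpos : 0 < α := by simp [hα]; linarith
  set B : ℝ := b₀ + ‖z‖ + ‖z'‖ with hB
  set M : ℝ := (f x₁).toReal + h x₁ with hM
  have hFx₁ : F x₁ = (M : EReal) := by
    rw [hM, EReal.coe_add, EReal.coe_toReal hx₁ (hnotbot x₁)]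
  have hlbF : ∀ x, ((α * ‖x‖^2 - B * ‖x‖ - c₀ : ℝ) : EReal) ≤ F x := by
    intro x
    have h2 : (α * ‖x‖^2 - B * ‖x‖ - c₀ : ℝ) ≤ (-a₀ * ‖x‖^2 - b₀ * ‖x‖ - c₀) + h x := by
      have habs : (‖x‖ - ‖z‖)^2 ≤ ‖x - z‖^2 := by
        have h1 : |‖x‖ - ‖z‖| ≤ ‖x - z‖ := abs_norm_sub_norm_le x z
        calc (‖x‖ - ‖z‖)^2 = |‖x‖ - ‖z‖|^2 := (sq_abs _).symm
        _ ≤ ‖x - z‖^2 := by nlinarith [abs_nonneg (‖x‖ - ‖z‖), norm_nonneg (x - z)]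
      have hzx : z' x ≤ ‖z'‖ * ‖x‖ := by
        calc z' x ≤ |z' x| := le_abs_self _
        _ ≤ ‖z'‖ * ‖x‖ := z'.le_opNorm x
      simp only [hh, hα, hB]
      nlinarith [norm_nonneg x, norm_nonneg z]
    calc ((α * ‖x‖^2 - B * ‖x‖ - c₀ : ℝ) : EReal)
        ≤ (((-a₀ * ‖x‖^2 - b₀ * ‖x‖ - c₀) + h x : ℝ) : EReal) := EReal.coe_le_coe_iff.2 h2
      _ = ((-a₀ * ‖x‖^2 - b₀ * ‖x‖ - c₀ : ℝ) : EReal) + (h x : EReal) := EReal.coe_add _ _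
      _ ≤ f x + (h x : EReal) := add_le_add_left (hlb x) _
  set R : ℝ := (|B| + |c₀| + |M| + 1)/α + 1 with hR
  set S : Set E := {x | F x ≤ (M : EReal)} with hS
  have hx₁S : x₁ ∈ S := by rw [hS, Set.mem_setOf_eq, hFx₁]
  have hSsub : S ⊆ Metric.closedBall 0 R := by
    intro x hx
    have h2 : α * ‖x‖^2 - B * ‖x‖ - c₀ ≤ M := EReal.coe_le_coe_iff.1 ((hlbF x).trans hx)
    rw [Metric.mem_closedBall, dist_zero_right]
    by_contra hcon
    push_neg at hcon
    have hR0 : 0 ≤ (|B| + |c₀| + |M| + 1)/α := by positivity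
    have hR1 : 1 ≤ R := by rw [hR]; linarith
    have hαR : α * R = |B| + |c₀| + |M| + 1 + α := by
      rw [hR]; field_simp
    have hx0 : (1:ℝ) ≤ ‖x‖ := hR1.trans hcon.le
    have s1 : α * R * ‖x‖ ≤ α * (‖x‖ * ‖x‖) := by
      rw [mul_assoc]
      exact mul_le_mul_of_nonneg_left
        (mul_le_mul_of_nonneg_right hcon.le (norm_nonneg x)) hαpos.le
    have s3 : α * R * ‖x‖ = (|B| + |c₀| + |M| + 1 + α) * ‖x‖ := by rw [hαR]
    have s2 : (|c₀| + |M| + 1 + α) * 1 ≤ (|c₀| + |M| + 1 + α) * ‖x‖ :=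
      mul_le_mul_of_nonneg_left hx0 (by positivity)
    have s4 : B * ‖x‖ ≤ |B| * ‖x‖ := mul_le_mul_of_nonneg_right (le_abs_self B) (norm_nonneg x)
    have hsq : ‖x‖^2 = ‖x‖ * ‖x‖ := sq ‖x‖
    nlinarith [le_abs_self c₀, le_abs_self M]
  have hSclosed : IsClosed S := hlscF.isClosed_preimage (M : EReal)
  have hScompact : IsCompact S :=
    (isCompact_closedBall (0 : E) R).of_isClosed_subset hSclosed hSsub
  obtain ⟨x₀, hx₀S, hx₀min⟩ := exists_min_on_compact' hScompact ⟨x₁, hx₁S⟩ hlscF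
  have hmin : ∀ y, F x₀ ≤ F y := by
    intro y
    by_cases hy : y ∈ S
    · exact hx₀min y hy
    · have h1 : (M : EReal) < F y := lt_of_not_ge hy
      exact (hx₀min x₁ hx₁S).trans (hFx₁.le.trans h1.le)
  have hFx₀top : F x₀ ≠ ⊤ := by
    intro hc
    exact absurd ((hx₀min x₁ hx₁S).trans_eq hFx₁) (by simp [hc])
  have hFx₀bot : F x₀ ≠ ⊥ := by
    intro hc
    have hcb := hlbF x₀
    rw [hc, le_bot_iff] at hcb
    exact EReal.coe_ne_bot _ hcb
  set m₀ : ℝ := (F x₀).toReal with hm₀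
  have hFx₀ : F x₀ = (m₀ : EReal) := (EReal.coe_toReal hFx₀top hFx₀bot).symm
  -- the perturbed function
  set H : E → ℝ := fun x => h x + ‖x - x₀‖^2 with hH
  have hHcont : Continuous H :=
    hcont.add (((continuous_id.sub continuous_const).norm).pow 2)
  have hHconv : ConvexOn ℝ Set.univ H := by
    have := convexOn_quad' (E := E) z x₀ z' 1 zero_le_one
    simpa [hH, hh] using this
  have hgrw : ∀ x, f x + (H x : EReal) = F x + ((‖x - x₀‖^2 : ℝ) : EReal) := by
    intro x
    rw [hF]
    show f x + ((h x + ‖x - x₀‖^2 : ℝ) : EReal) = f x + (h x : EReal) + _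
    rw [EReal.coe_add, add_assoc]
  have hglsc : LowerSemicontinuous (fun x => f x + (H x : EReal)) := by
    apply hlsc.add' ((continuous_coe_real_ereal.comp hHcont).lowerSemicontinuous)
    intro x
    exact EReal.continuousAt_add (Or.inr (EReal.coe_ne_bot _)) (Or.inr (EReal.coe_ne_top _))
  have hgproper : ∃ x, f x + (H x : EReal) ≠ ⊤ :=
    ⟨x₁, (EReal.add_lt_top hx₁ (EReal.coe_ne_top _)).ne⟩
  have hgbot : ∀ x, f x + (H x : EReal) ≠ ⊥ := fun x => by
    simp [EReal.add_eq_bot_iff, hnotbot x]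
  have hstrict : ∀ y, y ≠ x₀ → f x₀ + (H x₀ : EReal) < f y + (H y : EReal) := by
    intro y hy
    have hd : (0 : ℝ) < ‖y - x₀‖^2 := pow_pos (norm_pos_iff.2 (sub_ne_zero.2 hy)) 2
    rw [hgrw y, hgrw x₀]
    have e0 : F x₀ + ((‖x₀ - x₀‖^2 : ℝ) : EReal) = (m₀ : EReal) := by
      rw [hFx₀]; simp
    rw [e0]
    calc (m₀ : EReal) < ((m₀ + ‖y - x₀‖^2 : ℝ) : EReal) := by
          rw [EReal.coe_lt_coe_iff]; linarith
      _ = (m₀ : EReal) + ((‖y - x₀‖^2 : ℝ) : EReal) := EReal.coe_add _ _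
      _ ≤ F y + ((‖y - x₀‖^2 : ℝ) : EReal) := add_le_add_left (hFx₀ ▸ hmin y) _
  have h0 := W.zero_mem _ hgproper hgbot hglsc x₀ hstrict
  have hsub := W.sum_rule f ⟨x₁, hx₁⟩ hnotbot hlsc H hHcont hHconv x₀ h0
  rw [Set.mem_add] at hsub
  obtain ⟨a, ha, b, hb, hab⟩ := hsub
  have hba : b = -a := (neg_eq_of_add_eq_zero_right hab).symm
  rw [hba] at hb
  have hconvh : ConvexOn ℝ Set.univ h := by
    have := convexOn_quad' (E := E) z x₀ z' 0 le_rfl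
    simpa [hh] using this
  have hwh : (-a) ∈ convSubdiff h x₀ := by
    have : (-a) ∈ convSubdiff (fun x => h x + ‖x - x₀‖^2) x₀ := hb
    exact convSubdiff_perturb' hconvh this
  refine ⟨x₀, a, ha, ?_⟩
  have hJ := mem_dualityJ_of_subgrad' (x₀ - z) (z' - a) ?_
  · exact hJ
  intro v
  have hkey := hwh (v + z)
  simp only [hh, ContinuousLinearMap.neg_apply, ContinuousLinearMap.sub_apply] at hkey ⊢
  have e1 : v + z - z = v := by abel
  have e2 : v - (x₀ - z) = v + z - x₀ := by abel
  rw [e1] at hkey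
  rw [e2]
  have e3 : z' (v + z - x₀) = z' (v + z) - z' x₀ := by rw [map_sub]
  have e4 : a (v + z - x₀) = a (v + z) - a x₀ := by rw [map_sub]
  simp only [ContinuousLinearMap.sub_apply, e3, e4]
  linarith [hkey]

end Key


theorem stmt6 {E : Type*} [NormedAddCommGroup E] [NormedSpace ℝ E] [CompleteSpace E]
    [FiniteDimensional ℝ E]
    (W : WeakSubdiff E) (f : E → EReal)
    (hproper : ∃ x, f x ≠ ⊤) (hnotbot : ∀ x, f x ≠ ⊥)
    (hlsc : LowerSemicontinuous f) (hdown : InsigDownside f)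
    (hclosed : IsClosed {p : E × StrongDual ℝ E | p.2 ∈ W.sd f p.1}) :
    {p : E × StrongDual ℝ E | p.2 ∈ W.sd f p.1} - graNegJ E = Set.univ ∧
      ∀ z' : StrongDual ℝ E, ∃ x : E, z' ∈ W.sd f x + dualityJ x := by
  constructor
  · apply Set.eq_univ_of_forall
    intro p
    obtain ⟨x, x', hx, hJ⟩ := key_lemma W f hproper hnotbot hlsc hdown p.1 p.2
    rw [Set.mem_sub]
    refine ⟨(x, x'), hx, (x - p.1, x' - p.2), ?_, ?_⟩
    · show -(x' - p.2) ∈ dualityJ (x - p.1)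
      rw [neg_sub]
      exact hJ
    · apply Prod.ext <;> simp
  · intro z'
    obtain ⟨x, x', hx, hJ⟩ := key_lemma W f hproper hnotbot hlsc hdown 0 z'
    refine ⟨x, ?_⟩
    rw [Set.mem_add]
    exact ⟨x', hx, z' - x', by rwa [sub_zero] at hJ, by abel⟩
end

section
/- Let E be a real Banach space, ∂_w a weak subdifferential, and f : E → ]−∞,+∞] proper, lower semicontinuous, and with insignificant downside. Then (gra ∂_w f)^μ ⊆ closure(gra ∂_w f), where the closure is the norm-closure in E × E*. -/
open Pointwise

/-- The monotone polar `A^μ` of `A ⊆ E × E*`. -/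
def monoPolar {E : Type*} [NormedAddCommGroup E] [NormedSpace ℝ E]
    (A : Set (E × StrongDual ℝ E)) : Set (E × StrongDual ℝ E) :=
  {p | ∀ q ∈ A, 0 ≤ (q.2 - p.2) (q.1 - p.1)}

open Filter Topology

lemma ereal_add_coe_ne_bot (x : EReal) (r : ℝ) (hx : x ≠ ⊥) : x + (r : EReal) ≠ ⊥ := by
  induction x with
  | bot => exact absurd rfl hx
  | coe s => rw [← EReal.coe_add]; exact EReal.coe_ne_bot _
  | top => simp [EReal.top_add_of_ne_bot (EReal.coe_ne_bot r)]

lemma ereal_add_coe_ne_top (x : EReal) (r : ℝ) (hx : x ≠ ⊤) : x + (r : EReal) ≠ ⊤ := by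
  induction x with
  | bot => simp
  | coe s => rw [← EReal.coe_add]; exact EReal.coe_ne_top _
  | top => exact absurd rfl hx

lemma lsc_add_cont {E : Type*} [TopologicalSpace E] (f : E → EReal)
    (hlsc : LowerSemicontinuous f) (hnb : ∀ x, f x ≠ ⊥) (h : E → ℝ) (hc : Continuous h) :
    LowerSemicontinuous fun z => f z + (h z : EReal) := by
  intro x y hy
  rcases eq_or_ne y ⊥ with rfl | hyb
  · exact Eventually.of_forall fun z =>
      bot_lt_iff_ne_bot.2 (ereal_add_coe_ne_bot _ _ (hnb z))
  · lift y to ℝ using ⟨hy.ne_top, hyb⟩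
    obtain ⟨c, hc1, hc2⟩ := EReal.exists_between_coe_real hy
    have hfx : ((c - h x : ℝ) : EReal) < f x := by
      rcases eq_or_ne (f x) ⊤ with htop | htop
      · rw [htop]; exact EReal.coe_lt_top _
      · lift f x to ℝ using ⟨htop, hnb x⟩ with fx
        rw [← EReal.coe_add] at hc2
        rw [EReal.coe_lt_coe_iff] at hc2 ⊢
        linarith
    have Hf := hlsc x _ hfx
    have hcy : (y : ℝ) < c := by exact_mod_cast hc1
    have Hh : ∀ᶠ z in 𝓝 x, h x - (c - y) < h z :=
      (hc.tendsto x).eventually (eventually_gt_nhds (by linarith))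
    filter_upwards [Hf, Hh] with z h1 h2
    have e1 : (y : EReal) < ((c - h x + h z : ℝ) : EReal) := by
      rw [EReal.coe_lt_coe_iff]; linarith
    have e2 : ((c - h x + h z : ℝ) : EReal) < f z + (h z : EReal) := by
      rw [EReal.coe_add]; exact EReal.add_lt_add_right_coe h1 (h z)
    exact e1.trans e2

lemma ekeland {X : Type*} [MetricSpace X] [CompleteSpace X]
    {G : X → ℝ} (hG : LowerSemicontinuous G) {B : ℝ} (hB : ∀ z, B ≤ G z)
    {ε : ℝ} (hε : 0 < ε) (x₁ : X) :
    ∃ v : X, G v ≤ G x₁ ∧ ∀ z, z ≠ v → G v < G z + ε * dist z v := by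
  set S : X → Set X := fun y => {z | G z + ε * dist z y ≤ G y} with hS
  have hmem : ∀ y, y ∈ S y := by intro y; simp [hS]
  have hbdd : ∀ y, BddBelow (G '' S y) := fun y => ⟨B, by rintro _ ⟨z, _, rfl⟩; exact hB z⟩
  have htrans : ∀ {z y w}, z ∈ S y → y ∈ S w → z ∈ S w := by
    intro z y w h1 h2
    simp only [hS, Set.mem_setOf_eq] at h1 h2 ⊢
    have ht := dist_triangle z y w
    nlinarith [hε.le]
  have key : ∀ (n : ℕ) (y : X), ∃ z, z ∈ S y ∧ G z < sInf (G '' S y) + (1/2) ^ n := by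
    intro n y
    have hne : (G '' S y).Nonempty := ⟨G y, y, hmem y, rfl⟩
    have hlt : sInf (G '' S y) < sInf (G '' S y) + (1/2) ^ n :=
      lt_add_of_pos_right _ (by positivity)
    obtain ⟨_, ⟨z, hz, rfl⟩, h⟩ := exists_lt_of_csInf_lt hne hlt
    exact ⟨z, hz, h⟩
  choose step hstep1 hstep2 using key
  set x : ℕ → X := fun n => Nat.rec x₁ (fun n xn => step n xn) n with hx
  have hxs : ∀ n, x (n + 1) = step n (x n) := fun n => rfl
  have hchain : ∀ n, x (n + 1) ∈ S (x n) := fun n => by rw [hxs]; exact hstep1 n (x n)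
  have hchain' : ∀ n m, n ≤ m → x m ∈ S (x n) := by
    intro n m h
    induction m, h using Nat.le_induction with
    | base => exact hmem _
    | succ m hm ih => exact htrans (hchain m) ih
  have hsum : Summable fun n => dist (x n) (x (n + 1)) := by
    apply summable_of_sum_range_le (c := (G (x 0) - B) / ε) (fun n => dist_nonneg)
    intro n
    have htel : ε * ∑ i ∈ Finset.range n, dist (x i) (x (i + 1)) ≤ G (x 0) - G (x n) := by
      induction n with
      | zero => simp
      | succ n ih =>
        rw [Finset.sum_range_succ, mul_add]
        have h1 := hchain n
        simp only [hS, Set.mem_setOf_eq] at h1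
        rw [dist_comm] at h1
        linarith
    rw [le_div_iff₀ hε]
    have := hB (x n)
    linarith [htel]
  obtain ⟨v, hv⟩ := cauchySeq_tendsto_of_complete (cauchySeq_of_summable_dist hsum)
  have hvS : ∀ n, v ∈ S (x n) := by
    intro n
    have hcl : IsClosed (S (x n)) := by
      have hl : LowerSemicontinuous fun z => G z + ε * dist z (x n) :=
        hG.add (((continuous_const.mul (continuous_id.dist continuous_const))).lowerSemicontinuous)
      exact hl.isClosed_preimage (G (x n))
    exact hcl.mem_of_tendsto hv (eventually_atTop.2 ⟨n, fun m hm => hchain' n m hm⟩)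
  refine ⟨v, ?_, ?_⟩
  · have h0 := hvS 0
    simp only [hS, Set.mem_setOf_eq] at h0
    have h0' : G v + ε * dist v x₁ ≤ G x₁ := h0
    nlinarith [dist_nonneg (x := v) (y := x₁), hε.le]
  · intro z hz
    by_contra hcon
    push_neg at hcon
    have hzS : z ∈ S v := hcon
    have hzn : ∀ n, z ∈ S (x n) := fun n => htrans hzS (hvS n)
    have hd : ∀ n, dist z (x (n + 1)) ≤ (1/2) ^ n / ε := by
      intro n
      have h1 := hzn (n + 1)
      simp only [hS, Set.mem_setOf_eq] at h1
      have h2 : G (x (n + 1)) < sInf (G '' S (x n)) + (1/2) ^ n := by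
        rw [hxs]; exact hstep2 n (x n)
      have h3 : sInf (G '' S (x n)) ≤ G z := csInf_le (hbdd _) ⟨z, hzn n, rfl⟩
      rw [le_div_iff₀ hε]
      nlinarith
    have hlim : Filter.Tendsto (fun n => x (n + 1)) atTop (𝓝 z) := by
      have hp : Filter.Tendsto (fun n : ℕ => (1/2 : ℝ) ^ n) atTop (𝓝 0) :=
        tendsto_pow_atTop_nhds_zero_of_lt_one (by norm_num : (0:ℝ) ≤ 1/2) (by norm_num)
      have h0 : Filter.Tendsto (fun n : ℕ => (1/2 : ℝ) ^ n / ε) atTop (𝓝 0) := by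
        simpa using hp.div_const ε
      refine tendsto_iff_dist_tendsto_zero.2 ?_
      exact squeeze_zero (fun n => dist_nonneg) (fun n => by rw [dist_comm]; exact hd n) h0
    exact hz (tendsto_nhds_unique hlim (hv.comp (tendsto_add_atTop_nat 1)))

lemma convexity_aux {E : Type*} [NormedAddCommGroup E] [NormedSpace ℝ E]
    (x₀ v : E) (x₀s : StrongDual ℝ E) (ε : ℝ) (hε : 0 < ε) :
    ConvexOn ℝ Set.univ (fun z => ‖z - x₀‖^2 - x₀s z + ε * ‖z - v‖) := by
  refine ⟨convex_univ, ?_⟩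
  intro p _ q _ s t hs ht' hst
  simp only [smul_eq_mul]
  have hco : ∀ w : E, s • p + t • q - w = s • (p - w) + t • (q - w) := by
    intro w; have h' : s • w + t • w = w := by rw [← add_smul, hst, one_smul]
    rw [smul_sub, smul_sub]; rw [show s • p + t • q - w = s • p + t • q - (s • w + t • w) by rw [h']]
    abel
  have n1 : ‖s • p + t • q - x₀‖ ≤ s * ‖p - x₀‖ + t * ‖q - x₀‖ := by
    rw [hco x₀]
    refine (norm_add_le _ _).trans ?_
    rw [norm_smul, norm_smul, Real.norm_of_nonneg hs, Real.norm_of_nonneg ht']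
  have n2 : ‖s • p + t • q - v‖ ≤ s * ‖p - v‖ + t * ‖q - v‖ := by
    rw [hco v]
    refine (norm_add_le _ _).trans ?_
    rw [norm_smul, norm_smul, Real.norm_of_nonneg hs, Real.norm_of_nonneg ht']
  have nsq : ‖s • p + t • q - x₀‖^2 ≤ s * ‖p - x₀‖^2 + t * ‖q - x₀‖^2 := by
    nlinarith [n1, norm_nonneg (s • p + t • q - x₀), norm_nonneg (p - x₀), norm_nonneg (q - x₀),
      mul_nonneg (mul_nonneg hs ht') (sq_nonneg (‖p - x₀‖ - ‖q - x₀‖))]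
  have lin : x₀s (s • p + t • q) = s * x₀s p + t * x₀s q := by
    rw [map_add, map_smul, map_smul]; simp
  have n3 : ε * ‖s • p + t • q - v‖ ≤ ε * (s * ‖p - v‖ + t * ‖q - v‖) :=
    mul_le_mul_of_nonneg_left n2 hε.le
  nlinarith [nsq, n3, lin]


set_option maxHeartbeats 2000000 in
theorem stmt15 {E : Type*} [NormedAddCommGroup E] [NormedSpace ℝ E] [CompleteSpace E]
    (W : WeakSubdiff E) (f : E → EReal)
    (hproper : ∃ x, f x ≠ ⊤) (hnotbot : ∀ x, f x ≠ ⊥)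
    (hlsc : LowerSemicontinuous f) (hdown : InsigDownside f) :
    monoPolar {p : E × StrongDual ℝ E | p.2 ∈ W.sd f p.1} ⊆
      closure {p : E × StrongDual ℝ E | p.2 ∈ W.sd f p.1} := by
  obtain ⟨a₀, b₀, c₀, ha₀, hdw⟩ := hdown
  rintro ⟨x₀, x₀s⟩ hpolar
  rw [Metric.mem_closure_iff]
  intro δ hδ
  set ε := δ / 5 with hε0
  have hε : 0 < ε := by positivity
  obtain ⟨x₁, hx₁⟩ := hproper
  set h0 : E → ℝ := fun z => ‖z - x₀‖ ^ 2 - x₀s z with hh0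
  have h0cont : Continuous h0 :=
    (((continuous_id.sub continuous_const).norm.pow 2)).sub x₀s.continuous
  set g : E → EReal := fun z => f z + (h0 z : EReal) with hg
  have glsc : LowerSemicontinuous g := lsc_add_cont f hlsc hnotbot h0 h0cont
  -- lower bound
  set β : ℝ := b₀ + 2 * ‖x₀‖ + ‖x₀s‖ with hβ
  set B : ℝ := ‖x₀‖ ^ 2 - c₀ + (-(β ^ 2) / (4 * (1 - a₀))) with hB
  have hc1 : (0:ℝ) < 1 - a₀ := by linarith
  have hlowR : ∀ z : E, B ≤ (-a₀ * ‖z‖ ^ 2 - b₀ * ‖z‖ - c₀) + h0 z := by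
    intro z
    have quad : -(β ^ 2) / (4 * (1 - a₀)) ≤ (1 - a₀) * ‖z‖ ^ 2 - β * ‖z‖ := by
      rw [div_le_iff₀ (by positivity)]
      nlinarith [sq_nonneg (2 * (1 - a₀) * ‖z‖ - β)]
    have e1 : |‖z‖ - ‖x₀‖| ≤ ‖z - x₀‖ := abs_norm_sub_norm_le z x₀
    have e1sq : (‖z‖ - ‖x₀‖) ^ 2 ≤ ‖z - x₀‖ ^ 2 := by
      nlinarith [abs_nonneg (‖z‖ - ‖x₀‖), norm_nonneg (z - x₀), sq_abs (‖z‖ - ‖x₀‖)]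
    have e2 : x₀s z ≤ ‖x₀s‖ * ‖z‖ := by
      have := x₀s.le_opNorm z
      rw [Real.norm_eq_abs] at this
      exact (le_abs_self _).trans this
    simp only [hh0, hB, hβ] at *
    nlinarith [quad, e1sq, e2]
  have hlow : ∀ z : E, ((B : ℝ) : EReal) ≤ g z := by
    intro z
    have h1 : ((-a₀ * ‖z‖ ^ 2 - b₀ * ‖z‖ - c₀ : ℝ) : EReal) ≤ f z := hdw z
    calc ((B : ℝ) : EReal) ≤ (((-a₀ * ‖z‖ ^ 2 - b₀ * ‖z‖ - c₀) + h0 z : ℝ) : EReal) :=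
          EReal.coe_le_coe_iff.2 (hlowR z)
      _ = ((-a₀ * ‖z‖ ^ 2 - b₀ * ‖z‖ - c₀ : ℝ) : EReal) + ((h0 z : ℝ) : EReal) :=
          EReal.coe_add _ _
      _ ≤ f z + ((h0 z : ℝ) : EReal) := add_le_add_left h1 _
  -- truncation
  have hgx₁top : g x₁ ≠ ⊤ := ereal_add_coe_ne_top _ _ hx₁
  have hgx₁bot : g x₁ ≠ ⊥ := ereal_add_coe_ne_bot _ _ (hnotbot x₁)
  set r : ℝ := (g x₁).toReal with hrdef
  have hr : ((r : ℝ) : EReal) = g x₁ := EReal.coe_toReal hgx₁top hgx₁bot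
  set C : ℝ := r + 1 with hC
  set G : E → ℝ := fun z => (g z ⊓ (C : EReal)).toReal with hGdef
  have hBC : ∀ z : E, ((min B C : ℝ) : EReal) ≤ g z ⊓ (C : EReal) := by
    intro z
    refine le_inf ?_ ?_
    · exact le_trans (EReal.coe_le_coe_iff.2 (min_le_left _ _)) (hlow z)
    · exact EReal.coe_le_coe_iff.2 (min_le_right _ _)
  have hnbot : ∀ z : E, g z ⊓ (C : EReal) ≠ ⊥ := fun z =>
    ((EReal.bot_lt_coe _).trans_le (hBC z)).ne'
  have hntop : ∀ z : E, g z ⊓ (C : EReal) ≠ ⊤ :=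
    fun z => (inf_le_right.trans_lt (EReal.coe_lt_top C)).ne
  have hcoeG : ∀ z : E, ((G z : ℝ) : EReal) = g z ⊓ (C : EReal) := fun z =>
    EReal.coe_toReal (hntop z) (hnbot z)
  have hGlsc : LowerSemicontinuous G := by
    intro x y hy
    have h1 : ((y : ℝ) : EReal) < g x ⊓ (C : EReal) := by
      rw [← hcoeG x]; exact_mod_cast hy
    have h2 : ((y : ℝ) : EReal) < g x := h1.trans_le inf_le_left
    have h3 : ((y : ℝ) : EReal) < (C : EReal) := h1.trans_le inf_le_right
    filter_upwards [glsc x _ h2] with z hz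
    have h4 : ((y : ℝ) : EReal) < g z ⊓ (C : EReal) := lt_inf_iff.2 ⟨hz, h3⟩
    rw [← hcoeG z] at h4
    exact_mod_cast h4
  have hGB : ∀ z : E, min B C ≤ G z := by
    intro z
    have := hBC z
    rw [← hcoeG z] at this
    exact_mod_cast this
  obtain ⟨v, hvle, hvmin⟩ := ekeland hGlsc hGB hε x₁
  have hGx₁ : G x₁ = r := by
    have h1 : g x₁ ⊓ (C : EReal) = ((r : ℝ) : EReal) := by
      rw [← hr]
      exact inf_eq_left.2 (EReal.coe_le_coe_iff.2 (by simp [hC]))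
    simp only [hGdef]
    rw [h1, EReal.toReal_coe]
  have hGvr : G v ≤ r := hvle.trans_eq hGx₁
  have hgv : g v = ((G v : ℝ) : EReal) := by
    rcases le_or_gt ((C : ℝ) : EReal) (g v) with hle | hlt
    · exfalso
      have h1 : g v ⊓ (C : EReal) = ((C : ℝ) : EReal) := inf_eq_right.2 hle
      have h2 := hcoeG v
      rw [h1] at h2
      have : G v = C := by exact_mod_cast h2
      rw [this] at hGvr
      simp only [hC] at hGvr
      linarith
    · rw [hcoeG v, inf_eq_left.2 hlt.le]
  -- full perturbation
  set ht : E → ℝ := fun z => ‖z - x₀‖ ^ 2 - x₀s z + ε * ‖z - v‖ with hhtdef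
  have htcont : Continuous ht :=
    ((((continuous_id.sub continuous_const).norm.pow 2)).sub x₀s.continuous).add
      (continuous_const.mul (continuous_id.sub continuous_const).norm)
  have htconv : ConvexOn ℝ Set.univ ht := convexity_aux x₀ v x₀s ε hε
  have hFg : ∀ z : E, f z + (ht z : EReal) = g z + ((ε * ‖z - v‖ : ℝ) : EReal) := by
    intro z
    simp only [hg, hh0, hhtdef]
    rw [show (‖z - x₀‖ ^ 2 - x₀s z + ε * ‖z - v‖ : ℝ) = (‖z - x₀‖ ^ 2 - x₀s z) + ε * ‖z - v‖ from rfl]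
    rw [EReal.coe_add, ← add_assoc]
  have hFmin : ∀ y : E, y ≠ v → f v + (ht v : EReal) < f y + (ht y : EReal) := by
    intro y hy
    have h1 : G v < G y + ε * dist y v := hvmin y hy
    rw [dist_eq_norm] at h1
    calc f v + (ht v : EReal) = g v + ((ε * ‖v - v‖ : ℝ) : EReal) := hFg v
      _ = g v := by simp
      _ = ((G v : ℝ) : EReal) := hgv
      _ < ((G y + ε * ‖y - v‖ : ℝ) : EReal) := EReal.coe_lt_coe_iff.2 h1
      _ = ((G y : ℝ) : EReal) + ((ε * ‖y - v‖ : ℝ) : EReal) := EReal.coe_add _ _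
      _ ≤ g y + ((ε * ‖y - v‖ : ℝ) : EReal) :=
          add_le_add_left (le_of_eq_of_le (hcoeG y) inf_le_left) _
      _ = f y + (ht y : EReal) := (hFg y).symm
  have hFproper : ∃ x, (fun z => f z + (ht z : EReal)) x ≠ ⊤ :=
    ⟨x₁, ereal_add_coe_ne_top _ _ hx₁⟩
  have hFbot : ∀ x, (fun z => f z + (ht z : EReal)) x ≠ ⊥ :=
    fun x => ereal_add_coe_ne_bot _ _ (hnotbot x)
  have hFlsc : LowerSemicontinuous fun z => f z + (ht z : EReal) :=
    lsc_add_cont f hlsc hnotbot ht htcont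
  have h0mem : (0 : StrongDual ℝ E) ∈ W.sd (fun z => f z + (ht z : EReal)) v :=
    W.zero_mem _ hFproper hFbot hFlsc v hFmin
  have hsub := W.sum_rule f ⟨x₁, hx₁⟩ hnotbot hlsc ht htcont htconv v h0mem
  obtain ⟨a, ha, b, hb, hab⟩ := Set.mem_add.1 hsub
  have hba : b = -a := eq_neg_of_add_eq_zero_right hab
  -- key inequality
  have hkey : ∀ y : E, ‖v - x₀‖ ^ 2 ≤ ‖y - x₀‖ ^ 2 + ε * ‖y - v‖ + (a - x₀s) (y - v) := by
    intro y
    have h1 := hb y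
    rw [hba] at h1
    simp only [hhtdef, sub_self, norm_zero, mul_zero, add_zero,
      ContinuousLinearMap.neg_apply] at h1
    have h2 : x₀s y - x₀s v = x₀s (y - v) := (map_sub x₀s y v).symm
    have h3 : (a - x₀s) (y - v) = a (y - v) - x₀s (y - v) :=
      ContinuousLinearMap.sub_apply a x₀s (y - v)
    linarith [h1, h2, h3]
  have hpol : (0:ℝ) ≤ (a - x₀s) (v - x₀) := hpolar (v, a) ha
  have hnv : ‖v - x₀‖ ≤ ε := by
    have h1 := hkey x₀
    have h2 : (a - x₀s) (x₀ - v) = -((a - x₀s) (v - x₀)) := by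
      rw [show x₀ - v = -(v - x₀) from (neg_sub v x₀).symm, map_neg]
    rw [h2, norm_sub_rev x₀ v, sub_self, norm_zero] at h1
    by_contra hlt
    push_neg at hlt
    nlinarith [norm_nonneg (v - x₀), h1, hpol]
  have hbnd : ∀ u : E, -(4 * ε * ‖u‖) ≤ (a - x₀s) u := by
    intro u
    rcases eq_or_ne u 0 with rfl | hu
    · simp
    · have hnu : (0:ℝ) < ‖u‖ := norm_pos_iff.2 hu
      have h1 := hkey (v + (ε / ‖u‖) • u)
      have h2 : v + (ε / ‖u‖) • u - v = (ε / ‖u‖) • u := add_sub_cancel_left v _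
      rw [h2] at h1
      have h3 : ‖(ε / ‖u‖) • u‖ = ε := by
        rw [norm_smul, Real.norm_eq_abs, abs_of_pos (by positivity)]
        field_simp
      have h4 : (a - x₀s) ((ε / ‖u‖) • u) = (ε / ‖u‖) * ((a - x₀s) u) := by
        rw [map_smul]; simp
      rw [h3, h4] at h1
      have h5 : v + (ε / ‖u‖) • u - x₀ = (v - x₀) + (ε / ‖u‖) • u := by abel
      have h6 : ‖v + (ε / ‖u‖) • u - x₀‖ ≤ ‖v - x₀‖ + ε := by
        rw [h5]
        refine (norm_add_le _ _).trans ?_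
        rw [h3]
      have h7 : ‖v + (ε / ‖u‖) • u - x₀‖ ^ 2 ≤ (‖v - x₀‖ + ε) ^ 2 :=
        pow_le_pow_left₀ (norm_nonneg _) h6 2
      have h8 : -(4 * ε ^ 2) ≤ (ε / ‖u‖) * ((a - x₀s) u) := by
        nlinarith [h1, h7, mul_le_mul_of_nonneg_right hnv hε.le]
      by_contra hlt
      push_neg at hlt
      have h9 : (ε / ‖u‖) * ((a - x₀s) u) < (ε / ‖u‖) * (-(4 * ε * ‖u‖)) :=
        mul_lt_mul_of_pos_left hlt (by positivity)
      have h10 : (ε / ‖u‖) * (-(4 * ε * ‖u‖)) = -(4 * ε ^ 2) := by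
        field_simp
      rw [h10] at h9
      linarith
  have hnorm : ‖x₀s - a‖ ≤ 4 * ε := by
    rw [norm_sub_rev]
    refine ContinuousLinearMap.opNorm_le_bound _ (by positivity) ?_
    intro u
    rw [Real.norm_eq_abs, abs_le]
    constructor
    · have := hbnd u; linarith
    · have h1 := hbnd (-u)
      rw [map_neg, norm_neg] at h1
      linarith
  refine ⟨(v, a), ha, ?_⟩
  have d1 : dist x₀ v ≤ ε := by
    rw [dist_eq_norm, norm_sub_rev]; exact hnv
  have d2 : dist x₀s a ≤ 4 * ε := by
    rw [dist_eq_norm]; exact hnorm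
  calc dist (x₀, x₀s) (v, a) = max (dist x₀ v) (dist x₀s a) := Prod.dist_eq
    _ ≤ max ε (4 * ε) := max_le_max d1 d2
    _ = 4 * ε := max_eq_right (by linarith)
    _ < δ := by rw [hε0]; linarith
end
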